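/- Let a and b be linear operators on ℂ² satisfying ab + ba = 1, a² = 0, b² = 0, let φ₀ satisfy aφ₀ = 0 and Ψ₀ satisfy b*Ψ₀ = 0 with ⟨φ₀, Ψ₀⟩ = 1, set φ₁ := bφ₀, Ψ₁ := a*Ψ₀, and define S_φ f := ⟨φ₀,f⟩φ₀ + ⟨φ₁,f⟩φ₁ and S_Ψ f := ⟨Ψ₀,f⟩Ψ₀ + ⟨Ψ₁,f⟩Ψ₁. Then S_φ Ψₙ = φₙ and S_Ψ φₙ = Ψₙ for n = 0, 1. -/

import Mathlib

open Matrix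
open scoped InnerProductSpace ComplexOrder

noncomputable section

/-- Action of a 2×2 complex matrix (an operator) on a vector of ℂ². -/
def act (A : Matrix (Fin 2) (Fin 2) ℂ) (x : EuclideanSpace ℂ (Fin 2)) :
    EuclideanSpace ℂ (Fin 2) := WithLp.toLp 2 (A.mulVec x)

lemma act_adj (A : Matrix (Fin 2) (Fin 2) ℂ) (x y : EuclideanSpace ℂ (Fin 2)) :
    ⟪act A x, y⟫_ℂ = ⟪x, act Aᴴ y⟫_ℂ := by
  simp only [act, PiLp.inner_apply, RCLike.inner_apply, Fin.sum_univ_two]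
  show y 0 * (starRingEnd ℂ) ((A.mulVec x) 0) + y 1 * (starRingEnd ℂ) ((A.mulVec x) 1) =
    ((Aᴴ.mulVec y) 0) * (starRingEnd ℂ) (x 0) + ((Aᴴ.mulVec y) 1) * (starRingEnd ℂ) (x 1)
  simp [Matrix.mulVec, dotProduct, Fin.sum_univ_two, Matrix.conjTranspose_apply]
  ring

lemma act_act (A B : Matrix (Fin 2) (Fin 2) ℂ) (x : EuclideanSpace ℂ (Fin 2)) :
    act A (act B x) = act (A * B) x := by
  simp only [act]
  exact congrArg (WithLp.toLp 2) (Matrix.mulVec_mulVec x A B)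

/-- `S_φ Ψₙ = φₙ` and `S_Ψ φₙ = Ψₙ` for `n = 0, 1`. -/
theorem stmt6 (a b Sφ SΨ : Matrix (Fin 2) (Fin 2) ℂ)
    (hab : a * b + b * a = 1) (ha2 : a * a = 0) (hb2 : b * b = 0)
    (φ₀ Ψ₀ : EuclideanSpace ℂ (Fin 2))
    (hvacφ : act a φ₀ = 0) (hvacΨ : act bᴴ Ψ₀ = 0)
    (hnorm : ⟪φ₀, Ψ₀⟫_ℂ = 1)
    (hSφ : ∀ f, act Sφ f = ⟪φ₀, f⟫_ℂ • φ₀ + ⟪act b φ₀, f⟫_ℂ • act b φ₀)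
    (hSΨ : ∀ f, act SΨ f = ⟪Ψ₀, f⟫_ℂ • Ψ₀ + ⟪act aᴴ Ψ₀, f⟫_ℂ • act aᴴ Ψ₀) :
    act Sφ Ψ₀ = φ₀ ∧ act Sφ (act aᴴ Ψ₀) = act b φ₀ ∧
    act SΨ φ₀ = Ψ₀ ∧ act SΨ (act b φ₀) = act aᴴ Ψ₀ := by
  have h1 : ⟪φ₀, act aᴴ Ψ₀⟫_ℂ = 0 := by
    rw [← act_adj, hvacφ, inner_zero_left]
  have h2 : ⟪act b φ₀, Ψ₀⟫_ℂ = 0 := by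
    rw [act_adj, hvacΨ, inner_zero_right]
  have hab' : a * b = 1 - b * a := by rw [← hab]; noncomm_ring
  have habφ : act a (act b φ₀) = φ₀ := by
    rw [act_act, hab']
    have : act (1 - b * a) φ₀ = act 1 φ₀ - act b (act a φ₀) := by
      simp only [act, Matrix.sub_mulVec, Matrix.mulVec_mulVec, WithLp.toLp_sub, WithLp.ofLp_toLp]
    rw [this, hvacφ]
    simp [act]
  have h3 : ⟪act b φ₀, act aᴴ Ψ₀⟫_ℂ = 1 := by
    rw [← act_adj, habφ, hnorm]
  have c1 : ⟪Ψ₀, φ₀⟫_ℂ = 1 := by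
    rw [← inner_conj_symm, hnorm]; simp
  have c2 : ⟪act aᴴ Ψ₀, φ₀⟫_ℂ = 0 := by
    rw [← inner_conj_symm, h1]; simp
  have c3 : ⟪Ψ₀, act b φ₀⟫_ℂ = 0 := by
    rw [← inner_conj_symm, h2]; simp
  have c4 : ⟪act aᴴ Ψ₀, act b φ₀⟫_ℂ = 1 := by
    rw [← inner_conj_symm, h3]; simp
  refine ⟨?_, ?_, ?_, ?_⟩
  · rw [hSφ, hnorm, h2]; simp
  · rw [hSφ, h1, h3]; simp
  · rw [hSΨ, c1, c2]; simp
  · rw [hSΨ, c3, c4]; simp
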